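/- arXiv:0810.4666 — 3 statements merged into one kernel-verified Lean document; each statement's English description precedes it below -/
import Mathlib

section
/- Let n ≥ 1, let λ be a partition with at most n parts, and let d ≥ 0 be an integer. Then the number of semistandard tableaux of shape (d) with entries in {1, …, n} times the number of semistandard tableaux of shape λ with entries in {1, …, n} equals the sum, over all partitions μ with at most n parts obtained from λ by adding d boxes no two of which are in the same column (i.e., λ ⊆ μ, |μ| = |λ| + d, and μ_{i+1} ≤ λ_i for all i ≥ 1), of the number of semistandard tableaux of shape μ with entries in {1, …, n}. -/
/-- row shape -/
def RowFun (d : ℕ) : ℕ → ℕ := fun i => if i = 1 then d else 0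

/-- partition with at most n parts -/
def PShape (n : ℕ) (μ : ℕ → ℕ) : Prop :=
  μ 0 = 0 ∧ (∀ i, 1 ≤ i → μ (i + 1) ≤ μ i) ∧ (∀ i, n < i → μ i = 0)

/-- μ/ν is a horizontal strip (no size condition) -/
def HS (ν μ : ℕ → ℕ) : Prop :=
  (∀ i, 1 ≤ i → ν i ≤ μ i) ∧ (∀ i, 1 ≤ i → μ (i + 1) ≤ ν i)

/-- weight -/
def W (n : ℕ) (μ : ℕ → ℕ) : ℕ := ∑ i ∈ Finset.Icc 1 n, μ i

def IsSSYT (n : ℕ) (μ : ℕ → ℕ) (T : ℕ → ℕ → ℕ) : Prop :=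
    (∀ i j, T i j ≠ 0 ↔ 1 ≤ i ∧ 1 ≤ j ∧ j ≤ μ i) ∧
    (∀ i j, 1 ≤ i → 1 ≤ j → j ≤ μ i → T i j ≤ n) ∧
    (∀ i j, 1 ≤ i → 1 ≤ j → j + 1 ≤ μ i → T i j ≤ T i (j + 1)) ∧
    (∀ i j, 1 ≤ i → 1 ≤ j → j ≤ μ (i + 1) → T i j < T (i + 1) j)

/-- The number of semistandard tableaux of shape `μ` (a 1-indexed sequence of row
lengths) with entries in `{1, …, n}`: fillings `T` of the Young diagram of `μ`
(encoded as functions `ℕ → ℕ → ℕ`, with `T i j` the entry in row `i`, column `j`,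
equal to `0` exactly outside the diagram) with entries in `{1, …, n}` that weakly
increase along rows and strictly increase down columns. -/
noncomputable def ssytCount (n : ℕ) (μ : ℕ → ℕ) : ℕ :=
  Nat.card {T : ℕ → ℕ → ℕ //
    (∀ i j, T i j ≠ 0 ↔ 1 ≤ i ∧ 1 ≤ j ∧ j ≤ μ i) ∧
    (∀ i j, 1 ≤ i → 1 ≤ j → j ≤ μ i → T i j ≤ n) ∧
    (∀ i j, 1 ≤ i → 1 ≤ j → j + 1 ≤ μ i → T i j ≤ T i (j + 1)) ∧
    (∀ i j, 1 ≤ i → 1 ≤ j → j ≤ μ (i + 1) → T i j < T (i + 1) j)}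

lemma ssytCount_eq (n : ℕ) (μ : ℕ → ℕ) :
    ssytCount n μ = Nat.card {T : ℕ → ℕ → ℕ // IsSSYT n μ T} := rfl

/-- partitions are monotone -/
lemma PShape.mono {n : ℕ} {μ : ℕ → ℕ} (h : PShape n μ) {i j : ℕ} (hi : 1 ≤ i) (hij : i ≤ j) :
    μ j ≤ μ i := by
  induction j with
  | zero => omega
  | succ k ih =>
    rcases Nat.lt_or_ge i (k+1) with hlt | hge
    · exact le_trans (h.2.1 k (by omega)) (ih (by omega))
    · have : i = k + 1 := by omega
      subst this; exact le_rfl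

lemma PShape.le_one {n : ℕ} {μ : ℕ → ℕ} (h : PShape n μ) (i : ℕ) : μ i ≤ μ 1 := by
  rcases Nat.eq_zero_or_pos i with h0 | h0
  · subst h0; simp [h.1]
  · exact h.mono le_rfl h0

lemma PShape.le_W {n : ℕ} {μ : ℕ → ℕ} (h : PShape n μ) (hn : 1 ≤ n) (i : ℕ) :
    μ i ≤ W n μ := by
  calc μ i ≤ μ 1 := h.le_one i
  _ ≤ W n μ := Finset.single_le_sum (fun i _ => Nat.zero_le _) (by simp [Finset.mem_Icc]; omega)

/-- entries of an SSYT are bounded -/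
lemma IsSSYT.le {n : ℕ} {μ : ℕ → ℕ} {T : ℕ → ℕ → ℕ} (h : IsSSYT n μ T) (i j : ℕ) :
    T i j ≤ n := by
  by_cases h0 : T i j = 0
  · omega
  · obtain ⟨hi, hj, hjμ⟩ := (h.1 i j).1 h0
    exact h.2.1 i j hi hj hjμ

lemma IsSSYT.eq_zero {n : ℕ} {μ : ℕ → ℕ} {T : ℕ → ℕ → ℕ} (h : IsSSYT n μ T) {i j : ℕ}
    (hij : ¬ (1 ≤ i ∧ 1 ≤ j ∧ j ≤ μ i)) : T i j = 0 := by
  by_contra h0; exact hij ((h.1 i j).1 h0)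

/-- rows of an SSYT weakly increase (transitive version) -/
lemma IsSSYT.row_mono {n : ℕ} {μ : ℕ → ℕ} {T : ℕ → ℕ → ℕ} (h : IsSSYT n μ T) {i j j' : ℕ}
    (hi : 1 ≤ i) (hj : 1 ≤ j) (hjj : j ≤ j') (hj' : j' ≤ μ i) : T i j ≤ T i j' := by
  induction j' with
  | zero => omega
  | succ k ih =>
    rcases Nat.lt_or_ge j (k+1) with hlt | hge
    · exact le_trans (ih (by omega) (by omega)) (h.2.2.1 i k hi (by omega) (by omega))
    · have : j = k + 1 := by omega
      subst this; rfl

lemma ssyt_finite {n : ℕ} {μ : ℕ → ℕ} (hμ : PShape n μ) :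
    Finite {T : ℕ → ℕ → ℕ // IsSSYT n μ T} := by
  apply Finite.of_injective
    (fun T : {T : ℕ → ℕ → ℕ // IsSSYT n μ T} =>
      (fun p : Fin (n + 1) × Fin (μ 1 + 1) => (⟨T.1 p.1 p.2,
        Nat.lt_succ_of_le (T.2.le p.1 p.2)⟩ : Fin (n + 1))))
  intro T S hTS
  ext i j
  by_cases hin : i ≤ n ∧ j ≤ μ 1
  · have := congrFun hTS (⟨i, by omega⟩, ⟨j, by omega⟩)
    simpa using this
  · rcases Nat.lt_or_ge n i with hi | hi
    · -- i > n : μ i = 0 (if i ≥ 1) or i = 0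
      have h1 : T.1 i j = 0 := T.2.eq_zero (by
        rintro ⟨hi1, hj1, hjμ⟩
        have := hμ.2.2 i hi; omega)
      have h2 : S.1 i j = 0 := S.2.eq_zero (by
        rintro ⟨hi1, hj1, hjμ⟩
        have := hμ.2.2 i hi; omega)
      rw [h1, h2]
    · have hj : μ 1 < j := by omega
      have hol : ¬ (1 ≤ i ∧ 1 ≤ j ∧ j ≤ μ i) := by
        rintro ⟨hi1, hj1, hjμ⟩
        have := hμ.le_one i; omega
      rw [T.2.eq_zero hol, S.2.eq_zero hol]

open scoped Classical in
/-- candidate finset of functions supported on [1,N] with values ≤ M -/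
noncomputable def Cand (N M : ℕ) : Finset (ℕ → ℕ) :=
  Finset.image (fun g : Fin (N + 1) → Fin (M + 1) =>
    (fun i => if h : 1 ≤ i ∧ i ≤ N then (g ⟨i, by omega⟩ : ℕ) else 0)) Finset.univ

lemma mem_Cand {N M : ℕ} {f : ℕ → ℕ} (h0 : ∀ i, ¬(1 ≤ i ∧ i ≤ N) → f i = 0)
    (hb : ∀ i, f i ≤ M) : f ∈ Cand N M := by
  classical
  rw [Cand]
  apply Finset.mem_image.2
  refine ⟨fun k => ⟨f k, Nat.lt_succ_of_le (hb k)⟩, Finset.mem_univ _, ?_⟩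
  funext i
  by_cases h : 1 ≤ i ∧ i ≤ N
  · simp [h]
  · simp [h, h0 i h]

lemma sigma_card {ι : Type*} [Fintype ι] (B : ι → Type*) [∀ i, Finite (B i)] :
    Nat.card (Sigma B) = ∑ i, Nat.card (B i) := by
  have : ∀ i, Fintype (B i) := fun i => Fintype.ofFinite _
  simp only [Nat.card_eq_fintype_card, Fintype.card_sigma]

/-- reindexing sums by +1 -/
lemma sum_Icc_shift (f : ℕ → ℕ) (m n : ℕ) :
    ∑ i ∈ Finset.Icc m n, f (i + 1) = ∑ i ∈ Finset.Icc (m + 1) (n + 1), f i := by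
  apply Finset.sum_nbij' (i := fun i => i + 1) (j := fun i => i - 1) <;>
    simp +contextual [Finset.mem_Icc] <;> omega

lemma Icc_one_eq_insert (n : ℕ) : Finset.Icc 1 (n + 1) = insert 1 (Finset.Icc 2 (n + 1)) := by
  ext i; simp [Finset.mem_Icc, Finset.mem_insert]; omega

lemma W_succ_split (n : ℕ) (μ : ℕ → ℕ) :
    W (n + 1) μ = μ 1 + ∑ i ∈ Finset.Icc 2 (n + 1), μ i := by
  rw [W, Icc_one_eq_insert, Finset.sum_insert (by simp)]

lemma HS.W_le {ν μ : ℕ → ℕ} (h : HS ν μ) (n : ℕ) : W n ν ≤ W n μ :=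
  Finset.sum_le_sum fun i hi => h.1 i (by simp [Finset.mem_Icc] at hi; omega)

lemma W_eq_of_last_zero {n : ℕ} {μ : ℕ → ℕ} (h : μ (n + 1) = 0) : W (n + 1) μ = W n μ := by
  rw [W, W, Finset.sum_Icc_succ_top (by omega), h, Nat.add_zero]

section Branching

open scoped Classical

variable {n : ℕ} {μ : ℕ → ℕ}

/-- number of entries ≤ n in row i -/
noncomputable def nuOf (n : ℕ) (μ : ℕ → ℕ) (T : ℕ → ℕ → ℕ) : ℕ → ℕ :=
  fun i => if 1 ≤ i then Nat.findGreatest (fun j => 1 ≤ j ∧ T i j ≤ n) (μ i) else 0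

lemma nuOf_le (T : ℕ → ℕ → ℕ) (i : ℕ) : nuOf n μ T i ≤ μ i := by
  unfold nuOf
  split
  · exact Nat.findGreatest_le _
  · exact Nat.zero_le _

lemma nuOf_mem_iff (h : IsSSYT (n + 1) μ T) {i j : ℕ} (hi : 1 ≤ i) (hj : 1 ≤ j)
    (hjμ : j ≤ μ i) : T i j ≤ n ↔ j ≤ nuOf n μ T i := by
  constructor
  · intro hT
    simpa [nuOf, hi] using Nat.le_findGreatest hjμ ⟨hj, hT⟩
  · intro hle
    have hm : nuOf n μ T i = Nat.findGreatest (fun j => 1 ≤ j ∧ T i j ≤ n) (μ i) := by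
      simp [nuOf, hi]
    have hne : nuOf n μ T i ≠ 0 := by omega
    have hspec : 1 ≤ nuOf n μ T i ∧ T i (nuOf n μ T i) ≤ n := by
      have := Nat.findGreatest_of_ne_zero hm.symm hne
      exact this
    calc T i j ≤ T i (nuOf n μ T i) := h.row_mono hi hj hle (nuOf_le T i)
    _ ≤ n := hspec.2

/-- entries in row i are at least i -/
lemma IsSSYT.col_lower {N : ℕ} (h : IsSSYT N μ T) (hμ : PShape N' μ) :
    ∀ i j, 1 ≤ i → 1 ≤ j → j ≤ μ i → i ≤ T i j := by
  intro i
  induction i with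
  | zero => omega
  | succ k ih =>
    intro j h1 hj hjμ
    rcases Nat.eq_zero_or_pos k with h0 | h0
    · subst h0
      simp only [Nat.zero_add] at *
      have := (h.1 1 j).2 ⟨le_rfl, hj, hjμ⟩
      omega
    · have hjk : j ≤ μ k := le_trans hjμ (hμ.2.1 k h0)
      have := h.2.2.2 k j h0 hj hjμ
      have := ih j h0 hj hjk
      omega

lemma nuOf_shape (h : IsSSYT (n + 1) μ T) (hμ : PShape (n + 1) μ) :
    PShape n (nuOf n μ T) ∧ HS (nuOf n μ T) μ := by
  set ν := nuOf n μ T with hν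
  have hle : ∀ i, ν i ≤ μ i := nuOf_le T
  have hdec : ∀ i, 1 ≤ i → ν (i + 1) ≤ ν i := by
    intro i hi
    rcases Nat.eq_zero_or_pos (ν (i + 1)) with h0 | h0
    · omega
    · set m := ν (i + 1) with hm
      have hmμ : m ≤ μ (i + 1) := hle (i + 1)
      have hmn : T (i + 1) m ≤ n := by
        rw [nuOf_mem_iff h (by omega) h0 hmμ]
      have hcol := h.2.2.2 i m hi h0 hmμ
      have hTim : T i m ≤ n := by omega
      have : m ≤ μ i := le_trans hmμ (hμ.2.1 i hi)
      rw [← nuOf_mem_iff h hi h0 this] at *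
      omega
  refine ⟨⟨by simp [hν, nuOf], hdec, ?_⟩, fun i _ => hle i, ?_⟩
  · -- parts
    intro i hni
    by_contra h0
    have h0 : 1 ≤ ν i := by omega
    have hi : 1 ≤ i := by omega
    have hmμ : ν i ≤ μ i := hle i
    have hmn : T i (ν i) ≤ n := by rw [nuOf_mem_iff h hi h0 hmμ]
    have := h.col_lower hμ i (ν i) hi h0 hmμ
    omega
  · -- second HS condition: μ (i+1) ≤ ν i
    intro i hi
    rcases Nat.eq_zero_or_pos (μ (i + 1)) with h0 | h0
    · omega
    · set j := μ (i + 1) with hj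
      have hcol := h.2.2.2 i j hi h0 le_rfl
      have hup : T (i + 1) j ≤ n + 1 := h.le _ _
      have hjμ : j ≤ μ i := hμ.2.1 i hi
      have : T i j ≤ n := by omega
      rw [nuOf_mem_iff h hi h0 hjμ] at this
      exact this

/-- restriction of T to entries ≤ n -/
noncomputable def resT (n : ℕ) (μ : ℕ → ℕ) (T : ℕ → ℕ → ℕ) : ℕ → ℕ → ℕ :=
  fun i j => if j ≤ nuOf n μ T i then T i j else 0

lemma resT_isSSYT (h : IsSSYT (n + 1) μ T) (hμ : PShape (n + 1) μ) :
    IsSSYT n (nuOf n μ T) (resT n μ T) := by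
  obtain ⟨hsh, hhs⟩ := nuOf_shape h hμ
  set ν := nuOf n μ T with hν
  have hle : ∀ i, ν i ≤ μ i := nuOf_le T
  refine ⟨?_, ?_, ?_, ?_⟩
  · intro i j
    constructor
    · intro hne
      rw [resT] at hne
      split at hne
      · obtain ⟨hi, hj, _⟩ := (h.1 i j).1 hne
        exact ⟨hi, hj, by assumption⟩
      · omega
    · rintro ⟨hi, hj, hjν⟩
      have : T i j ≠ 0 := (h.1 i j).2 ⟨hi, hj, le_trans hjν (hle i)⟩
      simpa [resT, show j ≤ nuOf n μ T i from hjν] using this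
  · intro i j hi hj hjν
    have : T i j ≤ n := by
      rw [nuOf_mem_iff h hi hj (le_trans hjν (hle i))]; exact hjν
    simpa [resT, show j ≤ nuOf n μ T i from hjν] using this
  · intro i j hi hj hjν
    have h1 : j ≤ ν i := by omega
    have := h.2.2.1 i j hi hj (le_trans hjν (hle i))
    simpa [resT, show j < nuOf n μ T i from hjν, show j ≤ nuOf n μ T i from h1] using this
  · intro i j hi hj hjν
    have h1 : j ≤ ν i := le_trans hjν (hsh.2.1 i hi)
    have := h.2.2.2 i j hi hj (le_trans hjν (hle (i + 1)))
    simpa [resT, show j ≤ nuOf n μ T (i + 1) from hjν, show j ≤ nuOf n μ T i from h1] using this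

/-- extension of T' by entries n+1 -/
noncomputable def extT (n : ℕ) (μ ν : ℕ → ℕ) (T' : ℕ → ℕ → ℕ) : ℕ → ℕ → ℕ :=
  fun i j => if 1 ≤ i ∧ 1 ≤ j ∧ j ≤ μ i then (if j ≤ ν i then T' i j else n + 1) else 0

lemma extT_isSSYT {ν T' : _} (hμ : PShape (n + 1) μ) (hsh : PShape n ν) (hhs : HS ν μ)
    (h : IsSSYT n ν T') : IsSSYT (n + 1) μ (extT n μ ν T') := by
  have hle : ∀ i, 1 ≤ i → ν i ≤ μ i := hhs.1
  refine ⟨?_, ?_, ?_, ?_⟩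
  · intro i j
    unfold extT
    split
    · rename_i hd
      split
      · exact ⟨fun _ => hd, fun _ => (h.1 i j).2 ⟨hd.1, hd.2.1, by assumption⟩⟩
      · exact ⟨fun _ => hd, fun _ => by omega⟩
    · simp_all
  · intro i j hi hj hjμ
    have hd : 1 ≤ i ∧ 1 ≤ j ∧ j ≤ μ i := ⟨hi, hj, hjμ⟩
    unfold extT
    rw [if_pos hd]
    split
    · exact le_trans (h.2.1 i j hi hj (by assumption)) (by omega)
    · exact le_rfl
  · intro i j hi hj hjμ
    have hd1 : 1 ≤ i ∧ 1 ≤ j ∧ j ≤ μ i := ⟨hi, hj, by omega⟩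
    have hd2 : 1 ≤ i ∧ 1 ≤ j + 1 ∧ j + 1 ≤ μ i := ⟨hi, by omega, hjμ⟩
    unfold extT
    rw [if_pos hd1, if_pos hd2]
    by_cases hc2 : j + 1 ≤ ν i
    · rw [if_pos (by omega), if_pos hc2]
      exact h.2.2.1 i j hi hj hc2
    · rw [if_neg hc2]
      split
      · exact le_trans (h.2.1 i j hi hj (by assumption)) (by omega)
      · exact le_rfl
  · intro i j hi hj hjμ
    have hd2 : 1 ≤ i + 1 ∧ 1 ≤ j ∧ j ≤ μ (i + 1) := ⟨by omega, hj, hjμ⟩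
    have hd1 : 1 ≤ i ∧ 1 ≤ j ∧ j ≤ μ i := ⟨hi, hj, le_trans hjμ (hμ.2.1 i hi)⟩
    unfold extT
    rw [if_pos hd1, if_pos hd2]
    by_cases hc2 : j ≤ ν (i + 1)
    · rw [if_pos hc2, if_pos (le_trans hc2 (hsh.2.1 i hi))]
      exact h.2.2.2 i j hi hj hc2
    · rw [if_neg hc2, if_pos (le_trans hjμ (hhs.2 i hi))]
      have := h.2.1 i j hi hj (le_trans hjμ (hhs.2 i hi))
      omega

end Branching

section Branching2

open scoped Classical

variable {n : ℕ} {μ : ℕ → ℕ}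

lemma nuOf_extT {ν T' : _} (hsh : PShape n ν) (hhs : HS ν μ)
    (h : IsSSYT n ν T') : nuOf n μ (extT n μ ν T') = ν := by
  funext i
  rcases Nat.eq_zero_or_pos i with h0 | hi
  · subst h0; simp [nuOf, hsh.1]
  · have hν : nuOf n μ (extT n μ ν T') i
        = Nat.findGreatest (fun j => 1 ≤ j ∧ extT n μ ν T' i j ≤ n) (μ i) := by
      have hi' : 1 ≤ i := hi
      simp [nuOf, hi']
    apply le_antisymm
    · rw [hν]
      by_contra hc
      push_neg at hc
      set m := Nat.findGreatest (fun j => 1 ≤ j ∧ extT n μ ν T' i j ≤ n) (μ i) with hm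
      have hne : m ≠ 0 := by omega
      have hspec := Nat.findGreatest_of_ne_zero hm.symm hne
      have hmμ : m ≤ μ i := Nat.findGreatest_le _
      have : extT n μ ν T' i m = n + 1 := by
        unfold extT
        rw [if_pos ⟨hi, hspec.1, hmμ⟩, if_neg (by omega)]
      omega
    · rcases Nat.eq_zero_or_pos (ν i) with hz | hz
      · omega
      · rw [hν]
        apply Nat.le_findGreatest (le_trans (hhs.1 i hi) le_rfl)
        refine ⟨hz, ?_⟩
        unfold extT
        rw [if_pos ⟨hi, hz, le_trans le_rfl (hhs.1 i hi)⟩, if_pos le_rfl]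
        exact h.2.1 i (ν i) hi hz le_rfl
  
lemma resT_extT {ν T' : _} (hsh : PShape n ν) (hhs : HS ν μ)
    (h : IsSSYT n ν T') : resT n μ (extT n μ ν T') = T' := by
  funext i j
  rw [resT, nuOf_extT hsh hhs h]
  split
  · rename_i hjν
    by_cases hd : 1 ≤ i ∧ 1 ≤ j
    · unfold extT
      rw [if_pos ⟨hd.1, hd.2, le_trans hjν (hhs.1 i hd.1)⟩, if_pos hjν]
    · rw [h.eq_zero (by tauto)]
      unfold extT
      rw [if_neg (by tauto)]
  · rename_i hjν
    exact (h.eq_zero (by tauto)).symm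

lemma extT_resT (h : IsSSYT (n + 1) μ T) (hμ : PShape (n + 1) μ) :
    extT n μ (nuOf n μ T) (resT n μ T) = T := by
  funext i j
  unfold extT
  split
  · rename_i hd
    obtain ⟨hi, hj, hjμ⟩ := hd
    split
    · rename_i hjν
      simp [resT, hjν]
    · rename_i hjν
      have h1 : T i j ≤ n + 1 := h.2.1 i j hi hj hjμ
      have h2 : ¬ T i j ≤ n := by
        rw [nuOf_mem_iff h hi hj hjμ]; exact hjν
      omega
  · exact (h.eq_zero (by tauto)).symm

lemma strips_finite (hμ : PShape (n + 1) μ) :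
    Finite {ν : ℕ → ℕ // PShape n ν ∧ HS ν μ} := by
  apply Finite.of_injective
    (fun ν : {ν : ℕ → ℕ // PShape n ν ∧ HS ν μ} =>
      (fun k : Fin (n + 1) => (⟨ν.1 k, by
        have h1 : ν.1 k ≤ μ k := by
          rcases Nat.eq_zero_or_pos (k : ℕ) with h0 | h0
          · rw [h0, ν.2.1.1]; exact Nat.zero_le _
          · exact ν.2.2.1 k h0
        have := hμ.le_one k
        omega⟩ : Fin (μ 1 + 1))))
  intro ν σ h
  ext i
  rcases Nat.lt_or_ge i (n + 1) with hi | hi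
  · have := congrFun h ⟨i, hi⟩
    simpa using this
  · rw [ν.2.1.2.2 i (by omega), σ.2.1.2.2 i (by omega)]

lemma branching (hμ : PShape (n + 1) μ) :
    ssytCount (n + 1) μ = ∑ᶠ (ν : ℕ → ℕ) (_ : PShape n ν ∧ HS ν μ), ssytCount n ν := by
  have hfin := strips_finite hμ
  have : Fintype {ν : ℕ → ℕ // PShape n ν ∧ HS ν μ} := Fintype.ofFinite _
  have hfib : ∀ ν : {ν : ℕ → ℕ // PShape n ν ∧ HS ν μ},
      Finite {T' : ℕ → ℕ → ℕ // IsSSYT n ν.1 T'} := fun ν => ssyt_finite ν.2.1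
  rw [← finsum_subtype_eq_finsum_cond, finsum_eq_sum_of_fintype, ssytCount_eq]
  have hequiv : {T : ℕ → ℕ → ℕ // IsSSYT (n + 1) μ T} ≃
      Σ ν : {ν : ℕ → ℕ // PShape n ν ∧ HS ν μ}, {T' : ℕ → ℕ → ℕ // IsSSYT n ν.1 T'} := by
    refine ⟨fun T => ⟨⟨nuOf n μ T.1, nuOf_shape T.2 hμ⟩, ⟨resT n μ T.1, resT_isSSYT T.2 hμ⟩⟩,
      fun p => ⟨extT n μ p.1.1 p.2.1, extT_isSSYT hμ p.1.2.1 p.1.2.2 p.2.2⟩, ?_, ?_⟩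
    · intro T
      exact Subtype.ext (extT_resT T.2 hμ)
    · intro p
      have h1 : nuOf n μ (extT n μ p.1.1 p.2.1) = p.1.1 := nuOf_extT p.1.2.1 p.1.2.2 p.2.2
      have h2 : resT n μ (extT n μ p.1.1 p.2.1) = p.2.1 := resT_extT p.1.2.1 p.1.2.2 p.2.2
      apply Sigma.ext
      · exact Subtype.ext h1
      · apply (Subtype.heq_iff_coe_eq ?_).2 h2
        intro x
        simp only [h1]
  rw [Nat.card_congr hequiv, sigma_card]
  apply Finset.sum_congr rfl
  intro ν _
  rw [ssytCount_eq]

end Branching2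

lemma ssytCount_one {lam : ℕ → ℕ} (h : PShape 1 lam) : ssytCount 1 lam = 1 := by
  rw [ssytCount_eq, Nat.card_eq_one_iff_unique]
  constructor
  · constructor
    intro T S
    apply Subtype.ext
    funext i j
    by_cases hd : 1 ≤ i ∧ 1 ≤ j ∧ j ≤ lam i
    · have h1 : T.1 i j ≠ 0 := (T.2.1 i j).2 hd
      have h2 : S.1 i j ≠ 0 := (S.2.1 i j).2 hd
      have h3 := T.2.2.1 i j hd.1 hd.2.1 hd.2.2
      have h4 := S.2.2.1 i j hd.1 hd.2.1 hd.2.2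
      omega
    · rw [T.2.eq_zero hd, S.2.eq_zero hd]
  · refine ⟨⟨fun i j => if 1 ≤ i ∧ 1 ≤ j ∧ j ≤ lam i then 1 else 0, ?_, ?_, ?_, ?_⟩⟩
    · intro i j; dsimp only; split <;> simp_all
    · intro i j hi hj hjμ; simp [hi, hj, hjμ]
    · intro i j hi hj hjμ
      dsimp only
      rw [if_pos ⟨hi, hj, by omega⟩, if_pos ⟨hi, by omega, hjμ⟩]
    · intro i j hi hj hjμ
      exfalso
      have := h.2.2 (i + 1) (by omega)
      omega


lemma rowfun_shape (n d : ℕ) (hn : 1 ≤ n) : PShape n (RowFun d) := by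
  refine ⟨by simp [RowFun], fun i hi => ?_, fun i hi => ?_⟩
  · have h1 : i + 1 ≠ 1 := by omega
    simp [RowFun, h1, show i ≠ 0 by omega]
  · have h1 : i ≠ 1 := by omega
    simp [RowFun, h1]

lemma key_base {lam : ℕ → ℕ} (h : PShape 1 lam) (d : ℕ) :
    ssytCount 1 (RowFun d) * ssytCount 1 lam =
      ∑ᶠ (μ : ℕ → ℕ) (_ : PShape 1 μ ∧ HS lam μ ∧ W 1 μ = W 1 lam + d), ssytCount 1 μ := by
  classical
  have hW : ∀ f : ℕ → ℕ, W 1 f = f 1 := by intro f; simp [W]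
  set lamd : ℕ → ℕ := fun i => if i = 1 then lam 1 + d else 0 with hlamd
  have hlamdsh : PShape 1 lamd := by
    refine ⟨by simp [hlamd], fun i hi => ?_, fun i hi => ?_⟩
    · have h1 : i + 1 ≠ 1 := by omega
      simp [hlamd, h1, show i ≠ 0 by omega]
    · have h1 : i ≠ 1 := by omega
      simp [hlamd, h1]
  have hcond : ∀ x : ℕ → ℕ,
      (PShape 1 x ∧ HS lam x ∧ W 1 x = W 1 lam + d) ↔ x ∈ ({lamd} : Finset (ℕ → ℕ)) := by
    intro x
    simp only [Finset.mem_singleton]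
    constructor
    · rintro ⟨hsh, hhs, hWx⟩
      funext i
      match i with
      | 0 => rw [hsh.1, hlamd]; simp
      | 1 => rw [hW, hW] at hWx; simp [hlamd, hWx]
      | (k + 2) => rw [hsh.2.2 (k + 2) (by omega), hlamd]; simp
    · rintro rfl
      refine ⟨hlamdsh, ⟨fun i hi => ?_, fun i hi => ?_⟩, by rw [hW, hW]; simp [hlamd]⟩
      · rcases Nat.eq_or_lt_of_le hi with h1 | h1
        · rw [← h1]; simp [hlamd]
        · rw [h.2.2 i h1]; exact Nat.zero_le _
      · have h1 : i + 1 ≠ 1 := by omega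
        simp [hlamd, h1, show i ≠ 0 by omega]
  rw [finsum_cond_eq_sum_of_cond_iff _ (fun {x} _ => hcond x), Finset.sum_singleton,
    ssytCount_one h, ssytCount_one (rowfun_shape 1 d le_rfl),
    ssytCount_one hlamdsh]

section Exchange

variable {n d : ℕ} {lam rho : ℕ → ℕ}

noncomputable def PhiF (lam rho μ : ℕ → ℕ) : ℕ → ℕ :=
  fun i => if 1 ≤ i then max (lam (i+1)) (rho (i+1)) + (min (lam i) (rho i) - μ (i+1)) else 0

noncomputable def PsiF (n d : ℕ) (lam rho ν : ℕ → ℕ) : ℕ → ℕ :=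
  fun i => if i = 0 then 0 else if i = 1 then (W n ν + d + max (lam 1) (rho 1)) - W n rho
    else max (lam i) (rho i) + (min (lam (i-1)) (rho (i-1)) - ν (i-1))

lemma max_min_sum_facts (hlam : PShape (n + 1) lam) (hrho : PShape n rho) :
    W (n + 1) (fun i => max (lam i) (rho i)) + W (n + 1) (fun i => min (lam i) (rho i))
        = W (n + 1) lam + W (n + 1) rho
      ∧ W (n + 1) (fun i => min (lam i) (rho i)) = W n (fun i => min (lam i) (rho i))
      ∧ W (n + 1) rho = W n rho := by
  refine ⟨?_, ?_, ?_⟩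
  · rw [W, W, W, W, ← Finset.sum_add_distrib, ← Finset.sum_add_distrib]
    exact Finset.sum_congr rfl fun i _ => by omega
  · exact W_eq_of_last_zero (by have := hrho.2.2 (n + 1) (by omega); omega)
  · exact W_eq_of_last_zero (hrho.2.2 (n + 1) (by omega))

lemma phi_spec (hlam : PShape (n + 1) lam) (hrho : PShape n rho) {μ : ℕ → ℕ}
    (hμ : PShape (n + 1) μ) (h1 : HS lam μ) (h2 : HS rho μ)
    (hW : W (n + 1) μ = W (n + 1) lam + d) :
    (PShape n (PhiF lam rho μ) ∧ HS (PhiF lam rho μ) lam ∧ HS (PhiF lam rho μ) rho ∧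
      W n rho ≤ W n (PhiF lam rho μ) + d) ∧
    W n (PhiF lam rho μ) + d + max (lam 1) (rho 1) = W n rho + μ 1 := by
  set ν := PhiF lam rho μ with hν
  have hνdef : ∀ i, 1 ≤ i →
      ν i = max (lam (i+1)) (rho (i+1)) + (min (lam i) (rho i) - μ (i+1)) := by
    intro i hi; simp [hν, PhiF, hi]
  have hint : ∀ i, 1 ≤ i → max (lam (i+1)) (rho (i+1)) ≤ μ (i+1) ∧
      μ (i+1) ≤ min (lam i) (rho i) := by
    intro i hi
    exact ⟨max_le (h1.1 (i+1) (by omega)) (h2.1 (i+1) (by omega)),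
      le_min (h1.2 i hi) (h2.2 i hi)⟩
  -- per-row interval bounds for ν
  have hbnd : ∀ i, 1 ≤ i → max (lam (i+1)) (rho (i+1)) ≤ ν i ∧ ν i ≤ min (lam i) (rho i) := by
    intro i hi
    have := hνdef i hi
    have := hint i hi
    omega
  have hshν : PShape n ν := by
    refine ⟨by simp [hν, PhiF], fun i hi => ?_, fun i hi => ?_⟩
    · have := hbnd i hi
      have := hbnd (i+1) (by omega)
      omega
    · have h3 := hνdef i (by omega)
      have h4 := hlam.2.2 (i+1) (by omega)
      have h5 := hrho.2.2 (i+1) (by omega)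
      have h6 := hrho.2.2 i (by omega)
      omega
  have hhsl : HS ν lam := ⟨fun i hi => by have := hbnd i hi; omega,
    fun i hi => by have := hbnd i hi; omega⟩
  have hhsr : HS ν rho := ⟨fun i hi => by have := hbnd i hi; omega,
    fun i hi => by have := hbnd i hi; omega⟩
  -- the weight relation
  have hterm : ∀ i ∈ Finset.Icc 1 n, ν i + μ (i+1) =
      max (lam (i+1)) (rho (i+1)) + min (lam i) (rho i) := by
    intro i hi
    simp only [Finset.mem_Icc] at hi
    have := hνdef i hi.1
    have := hint i hi.1
    omega
  have E1 : W n ν + (∑ i ∈ Finset.Icc 1 n, μ (i+1)) =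
      (∑ i ∈ Finset.Icc 1 n, max (lam (i+1)) (rho (i+1))) +
        (∑ i ∈ Finset.Icc 1 n, min (lam i) (rho i)) := by
    rw [W, ← Finset.sum_add_distrib, ← Finset.sum_add_distrib]
    exact Finset.sum_congr rfl hterm
  rw [sum_Icc_shift, sum_Icc_shift (fun i => max (lam i) (rho i))] at E1
  norm_num at E1
  have E2 := W_succ_split n (fun i => max (lam i) (rho i))
  have E3 := W_succ_split n μ
  obtain ⟨E4, E5a, E5b⟩ := max_min_sum_facts hlam hrho
  have E5c : ∑ i ∈ Finset.Icc 1 n, min (lam i) (rho i)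
      = W n (fun i => min (lam i) (rho i)) := rfl
  have E6 : max (lam 1) (rho 1) ≤ μ 1 := max_le (h1.1 1 le_rfl) (h2.1 1 le_rfl)
  have hrel : W n ν + d + max (lam 1) (rho 1) = W n rho + μ 1 := by omega
  exact ⟨⟨hshν, hhsl, hhsr, by omega⟩, hrel⟩

end Exchange

section Exchange2

variable {n d : ℕ} {lam rho : ℕ → ℕ}

lemma psi_spec (hlam : PShape (n + 1) lam) (hrho : PShape n rho) {ν : ℕ → ℕ}
    (hν : PShape n ν) (h1 : HS ν lam) (h2 : HS ν rho) (hW : W n rho ≤ W n ν + d) :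
    (PShape (n + 1) (PsiF n d lam rho ν) ∧ HS lam (PsiF n d lam rho ν) ∧
      HS rho (PsiF n d lam rho ν) ∧
      W (n + 1) (PsiF n d lam rho ν) = W (n + 1) lam + d) ∧
    PsiF n d lam rho ν 1 + W n rho = W n ν + d + max (lam 1) (rho 1) := by
  set μ := PsiF n d lam rho ν with hμ
  have hμ2 : ∀ i, 2 ≤ i →
      μ i = max (lam i) (rho i) + (min (lam (i-1)) (rho (i-1)) - ν (i-1)) := by
    intro i hi
    have h0 : i ≠ 0 := by omega
    have h1 : i ≠ 1 := by omega
    simp [hμ, PsiF, h0, h1]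
  have hμ1 : μ 1 + W n rho = W n ν + d + max (lam 1) (rho 1) := by
    have : μ 1 = (W n ν + d + max (lam 1) (rho 1)) - W n rho := by simp [hμ, PsiF]
    omega
  -- interval bounds for ν
  have hbnd : ∀ i, 1 ≤ i → max (lam (i+1)) (rho (i+1)) ≤ ν i ∧ ν i ≤ min (lam i) (rho i) := by
    intro i hi
    exact ⟨max_le (h1.2 i hi) (h2.2 i hi), le_min (h1.1 i hi) (h2.1 i hi)⟩
  -- interval bounds for μ rows ≥ 2
  have hbnd2 : ∀ i, 1 ≤ i → max (lam (i+1)) (rho (i+1)) ≤ μ (i+1) ∧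
      μ (i+1) ≤ min (lam i) (rho i) := by
    intro i hi
    have h3 := hμ2 (i+1) (by omega)
    simp only [Nat.add_sub_cancel] at h3
    have := hbnd i hi
    omega
  have ha1μ1 : max (lam 1) (rho 1) ≤ μ 1 := by
    have := h2.W_le n
    omega
  have hshμ : PShape (n + 1) μ := by
    refine ⟨by simp [hμ, PsiF], fun i hi => ?_, fun i hi => ?_⟩
    · rcases Nat.eq_or_lt_of_le hi with h3 | h3
      · have := hbnd2 1 le_rfl
        rw [← h3]
        omega
      · have := hbnd2 i hi
        have := hbnd2 (i-1) (by omega)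
        have h4 : i - 1 + 1 = i := by omega
        rw [h4] at this
        omega
    · have h3 := hμ2 i (by omega)
      have h4 := hlam.2.2 i (by omega)
      have h5 := hrho.2.2 i (by omega)
      have h6 := hrho.2.2 (i-1) (by omega)
      omega
  have hhsl : HS lam μ := by
    refine ⟨fun i hi => ?_, fun i hi => ?_⟩
    · rcases Nat.eq_or_lt_of_le hi with h3 | h3
      · rw [← h3]; omega
      · have := hbnd2 (i-1) (by omega)
        have h4 : i - 1 + 1 = i := by omega
        rw [h4] at this
        omega
    · have := hbnd2 i hi
      omega
  have hhsr : HS rho μ := by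
    refine ⟨fun i hi => ?_, fun i hi => ?_⟩
    · rcases Nat.eq_or_lt_of_le hi with h3 | h3
      · rw [← h3]; omega
      · have := hbnd2 (i-1) (by omega)
        have h4 : i - 1 + 1 = i := by omega
        rw [h4] at this
        omega
    · have := hbnd2 i hi
      omega
  -- weight
  have hterm : ∀ i ∈ Finset.Icc 1 n, μ (i+1) + ν i =
      max (lam (i+1)) (rho (i+1)) + min (lam i) (rho i) := by
    intro i hi
    simp only [Finset.mem_Icc] at hi
    have h3 := hμ2 (i+1) (by omega)
    simp only [Nat.add_sub_cancel] at h3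
    have := hbnd i hi.1
    omega
  have E1 : (∑ i ∈ Finset.Icc 1 n, μ (i+1)) + W n ν =
      (∑ i ∈ Finset.Icc 1 n, max (lam (i+1)) (rho (i+1))) +
        (∑ i ∈ Finset.Icc 1 n, min (lam i) (rho i)) := by
    rw [W, ← Finset.sum_add_distrib, ← Finset.sum_add_distrib]
    exact Finset.sum_congr rfl hterm
  rw [sum_Icc_shift, sum_Icc_shift (fun i => max (lam i) (rho i))] at E1
  norm_num at E1
  have E2 := W_succ_split n (fun i => max (lam i) (rho i))
  have E3 := W_succ_split n μ
  obtain ⟨E4, E5a, E5b⟩ := max_min_sum_facts hlam hrho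
  have E5c : ∑ i ∈ Finset.Icc 1 n, min (lam i) (rho i)
      = W n (fun i => min (lam i) (rho i)) := rfl
  have E5d : W (n + 1) lam = lam 1 + ∑ i ∈ Finset.Icc 2 (n + 1), lam i :=
    W_succ_split n lam
  have hWμ : W (n + 1) μ = W (n + 1) lam + d := by omega
  exact ⟨⟨hshμ, hhsl, hhsr, hWμ⟩, hμ1⟩

lemma psi_phi (hlam : PShape (n + 1) lam) (hrho : PShape n rho) {μ : ℕ → ℕ}
    (hμ : PShape (n + 1) μ) (h1 : HS lam μ) (h2 : HS rho μ)
    (hW : W (n + 1) μ = W (n + 1) lam + d) :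
    PsiF n d lam rho (PhiF lam rho μ) = μ := by
  obtain ⟨⟨hshν, hhsl, hhsr, hWν⟩, hrel⟩ := phi_spec hlam hrho hμ h1 h2 hW
  set ν := PhiF lam rho μ with hν
  funext i
  match i with
  | 0 => simp [PsiF, hμ.1]
  | 1 =>
    have : PsiF n d lam rho ν 1 = (W n ν + d + max (lam 1) (rho 1)) - W n rho := by
      simp [PsiF]
    omega
  | (k + 2) =>
    have h3 : PsiF n d lam rho ν (k + 2) =
        max (lam (k+2)) (rho (k+2)) + (min (lam (k+1)) (rho (k+1)) - ν (k+1)) := by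
      simp [PsiF]
    have h4 : ν (k+1) = max (lam (k+2)) (rho (k+2)) + (min (lam (k+1)) (rho (k+1)) - μ (k+2)) := by
      simp [hν, PhiF]
    have h5 : max (lam (k+2)) (rho (k+2)) ≤ μ (k+2) :=
      max_le (h1.1 (k+2) (by omega)) (h2.1 (k+2) (by omega))
    have h6 : μ (k+2) ≤ min (lam (k+1)) (rho (k+1)) :=
      le_min (h1.2 (k+1) (by omega)) (h2.2 (k+1) (by omega))
    omega

lemma phi_psi (hlam : PShape (n + 1) lam) (hrho : PShape n rho) {ν : ℕ → ℕ}
    (hν : PShape n ν) (h1 : HS ν lam) (h2 : HS ν rho) (hW : W n rho ≤ W n ν + d) :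
    PhiF lam rho (PsiF n d lam rho ν) = ν := by
  obtain ⟨⟨hshμ, hhsl, hhsr, hWμ⟩, hrel⟩ := psi_spec hlam hrho hν h1 h2 hW
  set μ := PsiF n d lam rho ν with hμdef
  funext i
  rcases Nat.eq_zero_or_pos i with h0 | hi
  · subst h0; simp [PhiF, hν.1]
  · have h3 : PhiF lam rho μ i =
        max (lam (i+1)) (rho (i+1)) + (min (lam i) (rho i) - μ (i+1)) := by
      have hi' : 1 ≤ i := hi
      simp [PhiF, hi']
    have h4 : μ (i+1) = max (lam (i+1)) (rho (i+1)) + (min (lam i) (rho i) - ν i) := by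
      have e0 : i + 1 ≠ 0 := by omega
      have e1 : i + 1 ≠ 1 := by omega
      simp [hμdef, PsiF, e0, e1, show i ≠ 0 by omega]
    have h5 : max (lam (i+1)) (rho (i+1)) ≤ ν i := max_le (h1.2 i hi) (h2.2 i hi)
    have h6 : ν i ≤ min (lam i) (rho i) := le_min (h1.1 i hi) (h2.1 i hi)
    omega

end Exchange2

section Exchange3

open scoped Classical

variable {n d : ℕ} {lam rho : ℕ → ℕ}

lemma exchange (hlam : PShape (n + 1) lam) (hrho : PShape n rho) (d : ℕ) :
    ((Cand (n + 1) (W (n + 1) lam + d)).filter fun ν =>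
        PShape n ν ∧ HS ν lam ∧ HS ν rho ∧ W n rho ≤ W n ν + d).card =
    ((Cand (n + 1) (W (n + 1) lam + d)).filter fun μ =>
        PShape (n + 1) μ ∧ HS lam μ ∧ W (n + 1) μ = W (n + 1) lam + d ∧ HS rho μ).card := by
  refine Finset.card_bij' (fun ν _ => PsiF n d lam rho ν) (fun μ _ => PhiF lam rho μ)
    ?_ ?_ ?_ ?_
  · intro ν hν
    rw [Finset.mem_filter] at hν
    obtain ⟨_, hsh, h1, h2, hW⟩ := hν
    obtain ⟨⟨hshμ, hhsl, hhsr, hWμ⟩, _⟩ := psi_spec hlam hrho hsh h1 h2 hW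
    rw [Finset.mem_filter]
    refine ⟨mem_Cand ?_ ?_, hshμ, hhsl, hWμ, hhsr⟩
    · intro i hi
      rcases Nat.eq_zero_or_pos i with h0 | h0
      · subst h0; exact hshμ.1
      · exact hshμ.2.2 i (by omega)
    · intro i
      calc PsiF n d lam rho ν i ≤ W (n + 1) (PsiF n d lam rho ν) := hshμ.le_W (by omega) i
      _ = W (n + 1) lam + d := hWμ
  · intro μ hμ
    rw [Finset.mem_filter] at hμ
    obtain ⟨_, hsh, h1, hW, h2⟩ := hμ
    obtain ⟨⟨hshν, hhsl, hhsr, hWν⟩, _⟩ := phi_spec hlam hrho hsh h1 h2 hW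
    rw [Finset.mem_filter]
    refine ⟨mem_Cand ?_ ?_, hshν, hhsl, hhsr, hWν⟩
    · intro i hi
      rcases Nat.eq_zero_or_pos i with h0 | h0
      · subst h0; exact hshν.1
      · exact hshν.2.2 i (by omega)
    · intro i
      rcases Nat.eq_zero_or_pos i with h0 | h0
      · subst h0; simp [PhiF]
      · calc PhiF lam rho μ i ≤ lam i := hhsl.1 i h0
        _ ≤ W (n + 1) lam + d := le_trans (hlam.le_W (by omega) i) (Nat.le_add_right _ _)
  · intro ν hν
    rw [Finset.mem_filter] at hν
    exact phi_psi hlam hrho hν.2.1 hν.2.2.1 hν.2.2.2.1 hν.2.2.2.2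
  · intro μ hμ
    rw [Finset.mem_filter] at hμ
    exact psi_phi hlam hrho hμ.2.1 hμ.2.2.1 hμ.2.2.2.2 hμ.2.2.2.1

end Exchange3

section Main

open scoped Classical

lemma branching_finset {n : ℕ} {μ : ℕ → ℕ} (hμ : PShape (n + 1) μ) {t : Finset (ℕ → ℕ)}
    (ht : ∀ ν, PShape n ν ∧ HS ν μ → ν ∈ t) :
    ssytCount (n + 1) μ = ∑ ν ∈ t.filter (fun ν => PShape n ν ∧ HS ν μ), ssytCount n ν := by
  rw [branching hμ]
  apply finsum_cond_eq_sum_of_cond_iff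
  intro ν _
  rw [Finset.mem_filter]
  exact ⟨fun h => ⟨ht ν h, h⟩, fun h => h.2⟩

lemma W_succ_top (n : ℕ) (f : ℕ → ℕ) : W (n + 1) f = W n f + f (n + 1) :=
  Finset.sum_Icc_succ_top (by omega) f

lemma key (n : ℕ) (hn : 1 ≤ n) {lam : ℕ → ℕ} (hlam : PShape n lam) (d : ℕ) :
    ssytCount n (RowFun d) * ssytCount n lam =
      ∑ᶠ (μ : ℕ → ℕ) (_ : PShape n μ ∧ HS lam μ ∧ W n μ = W n lam + d), ssytCount n μ := by
  induction n, hn using Nat.le_induction generalizing lam d with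
  | base => exact key_base hlam d
  | succ n hn IH =>
    set M := W (n + 1) lam + d with hM
    set C := Cand (n + 1) M with hC
    have hmemC : ∀ f : ℕ → ℕ, PShape (n + 1) f → (∀ i, f i ≤ M) → f ∈ C := by
      intro f hsh hb
      apply mem_Cand _ hb
      intro i hi
      rcases Nat.eq_zero_or_pos i with h0 | h0
      · subst h0; exact hsh.1
      · exact hsh.2.2 i (by omega)
    have hmemCn : ∀ f : ℕ → ℕ, PShape n f → (∀ i, f i ≤ M) → f ∈ C := by
      intro f hsh hb
      apply mem_Cand _ hb
      intro i hi
      rcases Nat.eq_zero_or_pos i with h0 | h0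
      · subst h0; exact hsh.1
      · exact hsh.2.2 i (by omega)
    have hWlam : W n lam ≤ W (n + 1) lam := by rw [W_succ_top]; omega
    -- convert RHS
    have hRHS : (∑ᶠ (μ : ℕ → ℕ)
          (_ : PShape (n + 1) μ ∧ HS lam μ ∧ W (n + 1) μ = W (n + 1) lam + d),
            ssytCount (n + 1) μ)
        = ∑ μ ∈ C.filter
            (fun μ => PShape (n + 1) μ ∧ HS lam μ ∧ W (n + 1) μ = W (n + 1) lam + d),
            ssytCount (n + 1) μ := by
      apply finsum_cond_eq_sum_of_cond_iff
      intro μ _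
      rw [Finset.mem_filter]
      refine ⟨fun h => ⟨hmemC μ h.1 fun i => ?_, h⟩, fun h => h.2⟩
      calc μ i ≤ W (n + 1) μ := h.1.le_W (by omega) i
      _ = M := h.2.2
    -- branch the row
    have hrow : ssytCount (n + 1) (RowFun d)
        = ∑ e ∈ Finset.range (d + 1), ssytCount n (RowFun e) := by
      rw [branching (rowfun_shape (n + 1) d (by omega)),
        finsum_cond_eq_sum_of_cond_iff _ (t := (Finset.range (d + 1)).image RowFun)
          (fun {ν} _ => ?_), Finset.sum_image (fun x _ y _ h => ?_)]
      · have := congrFun h 1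
        simpa [RowFun] using this
      · constructor
        · rintro ⟨h1, h2⟩
          rw [Finset.mem_image]
          refine ⟨ν 1, Finset.mem_range.2 ?_, ?_⟩
          · have h3 := h2.1 1 le_rfl
            have h4 : ν 1 ≤ d := by simpa [RowFun] using h3
            omega
          · funext i
            match i with
            | 0 => simp [RowFun, h1.1]
            | 1 => simp [RowFun]
            | (k + 2) =>
              have h5 := h2.1 (k + 2) (by omega)
              have e2 : k + 2 ≠ 1 := by omega
              simp [RowFun, e2] at h5 ⊢
              omega
        · intro h
          rw [Finset.mem_image] at h
          obtain ⟨e, he, rfl⟩ := h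
          rw [Finset.mem_range] at he
          refine ⟨rowfun_shape n e hn, fun i hi => ?_, fun i hi => ?_⟩
          · rcases Nat.eq_or_lt_of_le hi with h1 | h1
            · rw [← h1]; simp [RowFun]; omega
            · have : i ≠ 1 := by omega
              simp [RowFun, this]
          · have : i + 1 ≠ 1 := by omega
            simp [RowFun, this, show i ≠ 0 by omega]
    -- branch lam
    have hlamBr : ssytCount (n + 1) lam
        = ∑ ν ∈ C.filter (fun ν => PShape n ν ∧ HS ν lam), ssytCount n ν := by
      apply branching_finset hlam
      intro ν hν
      apply hmemCn ν hν.1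
      intro i
      rcases Nat.eq_zero_or_pos i with h0 | h0
      · subst h0; rw [hν.1.1]; exact Nat.zero_le _
      · calc ν i ≤ lam i := hν.2.1 i h0
        _ ≤ W (n + 1) lam := hlam.le_W (by omega) i
        _ ≤ M := by omega
    -- use IH pointwise
    have hIH : ∀ e ∈ Finset.range (d + 1),
        ∀ ν ∈ C.filter (fun ν => PShape n ν ∧ HS ν lam),
        ssytCount n (RowFun e) * ssytCount n ν =
          ∑ ρ ∈ C.filter (fun ρ => PShape n ρ ∧ HS ν ρ ∧ W n ρ = W n ν + e),
            ssytCount n ρ := by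
      intro e he ν hν
      rw [Finset.mem_range] at he
      rw [Finset.mem_filter] at hν
      have hWν : W n ν ≤ W n lam := Finset.sum_le_sum fun i hi =>
        hν.2.2.1 i (by simp [Finset.mem_Icc] at hi; omega)
      rw [IH hν.2.1 e]
      apply finsum_cond_eq_sum_of_cond_iff
      intro ρ _
      rw [Finset.mem_filter]
      refine ⟨fun h => ⟨hmemCn ρ h.1 fun i => ?_, h⟩, fun h => h.2⟩
      calc ρ i ≤ W n ρ := h.1.le_W hn i
      _ = W n ν + e := h.2.2
      _ ≤ M := by omega
    calc ssytCount (n + 1) (RowFun d) * ssytCount (n + 1) lam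
        = ∑ e ∈ Finset.range (d + 1), ∑ ν ∈ C.filter (fun ν => PShape n ν ∧ HS ν lam),
            ssytCount n (RowFun e) * ssytCount n ν := by
          rw [hrow, hlamBr]; exact Finset.sum_mul_sum _ _ _ _
      _ = ∑ e ∈ Finset.range (d + 1), ∑ ν ∈ C.filter (fun ν => PShape n ν ∧ HS ν lam),
            ∑ ρ ∈ C.filter (fun ρ => PShape n ρ ∧ HS ν ρ ∧ W n ρ = W n ν + e),
              ssytCount n ρ :=
          Finset.sum_congr rfl fun e he => Finset.sum_congr rfl fun ν hν => hIH e he ν hν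
      _ = ∑ ν ∈ C.filter (fun ν => PShape n ν ∧ HS ν lam), ∑ e ∈ Finset.range (d + 1),
            ∑ ρ ∈ C.filter (fun ρ => PShape n ρ ∧ HS ν ρ ∧ W n ρ = W n ν + e),
              ssytCount n ρ := Finset.sum_comm
      _ = ∑ ν ∈ C.filter (fun ν => PShape n ν ∧ HS ν lam),
            ∑ ρ ∈ C.filter (fun ρ => PShape n ρ ∧ HS ν ρ ∧ W n ρ ≤ W n ν + d),
              ssytCount n ρ := by
          apply Finset.sum_congr rfl
          intro ν _
          have hmap : ∀ ρ ∈ C.filter (fun ρ => PShape n ρ ∧ HS ν ρ ∧ W n ρ ≤ W n ν + d),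
              (fun ρ => W n ρ - W n ν) ρ ∈ Finset.range (d + 1) := by
            intro ρ hρ
            rw [Finset.mem_filter] at hρ
            rw [Finset.mem_range]
            show W n ρ - W n ν < d + 1
            have := hρ.2.2.1.W_le n
            omega
          rw [← Finset.sum_fiberwise_of_maps_to hmap (fun ρ => ssytCount n ρ)]
          apply Finset.sum_congr rfl
          intro e he
          rw [Finset.mem_range] at he
          rw [Finset.filter_filter]
          refine Finset.sum_congr (Finset.filter_congr fun ρ _ => ?_) fun _ _ => rfl
          constructor
          · rintro ⟨h1, h2, h3⟩
            have := h2.W_le n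
            exact ⟨⟨h1, h2, by omega⟩, by omega⟩
          · rintro ⟨⟨h1, h2, h3⟩, h4⟩
            have := h2.W_le n
            exact ⟨h1, h2, by omega⟩
      _ = ∑ ν ∈ C.filter (fun ν => PShape n ν ∧ HS ν lam), ∑ ρ ∈ C,
            if PShape n ρ ∧ HS ν ρ ∧ W n ρ ≤ W n ν + d then ssytCount n ρ else 0 :=
          Finset.sum_congr rfl fun ν _ => Finset.sum_filter _ _
      _ = ∑ ρ ∈ C, ∑ ν ∈ C.filter (fun ν => PShape n ν ∧ HS ν lam),
            if PShape n ρ ∧ HS ν ρ ∧ W n ρ ≤ W n ν + d then ssytCount n ρ else 0 :=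
          Finset.sum_comm
      _ = ∑ ρ ∈ C, ((C.filter (fun ν => PShape n ν ∧ HS ν lam)).filter
            (fun ν => PShape n ρ ∧ HS ν ρ ∧ W n ρ ≤ W n ν + d)).card * ssytCount n ρ := by
          apply Finset.sum_congr rfl
          intro ρ _
          rw [← Finset.sum_filter, Finset.sum_const, smul_eq_mul]
      _ = ∑ ρ ∈ C, ((C.filter
            (fun μ => PShape (n + 1) μ ∧ HS lam μ ∧ W (n + 1) μ = W (n + 1) lam + d)).filter
            (fun μ => PShape n ρ ∧ HS ρ μ)).card * ssytCount n ρ := by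
          apply Finset.sum_congr rfl
          intro ρ _
          congr 1
          by_cases hρ : PShape n ρ
          · have lhs_eq : (C.filter (fun ν => PShape n ν ∧ HS ν lam)).filter
                (fun ν => PShape n ρ ∧ HS ν ρ ∧ W n ρ ≤ W n ν + d) =
                C.filter (fun ν => PShape n ν ∧ HS ν lam ∧ HS ν ρ ∧ W n ρ ≤ W n ν + d) := by
              rw [Finset.filter_filter]
              exact Finset.filter_congr fun ν _ => by tauto
            have rhs_eq : (C.filter
                (fun μ => PShape (n + 1) μ ∧ HS lam μ ∧ W (n + 1) μ = W (n + 1) lam + d)).filter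
                (fun μ => PShape n ρ ∧ HS ρ μ) =
                C.filter (fun μ => PShape (n + 1) μ ∧ HS lam μ ∧
                  W (n + 1) μ = W (n + 1) lam + d ∧ HS ρ μ) := by
              rw [Finset.filter_filter]
              exact Finset.filter_congr fun μ _ => by tauto
            rw [lhs_eq, rhs_eq]
            exact exchange hlam hρ d
          · rw [Finset.filter_false_of_mem fun ν _ => by tauto,
              Finset.filter_false_of_mem fun μ _ => by tauto]
      _ = ∑ ρ ∈ C, ∑ μ ∈ C.filter
            (fun μ => PShape (n + 1) μ ∧ HS lam μ ∧ W (n + 1) μ = W (n + 1) lam + d),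
            if PShape n ρ ∧ HS ρ μ then ssytCount n ρ else 0 := by
          apply Finset.sum_congr rfl
          intro ρ _
          rw [← Finset.sum_filter, Finset.sum_const, smul_eq_mul]
      _ = ∑ μ ∈ C.filter
            (fun μ => PShape (n + 1) μ ∧ HS lam μ ∧ W (n + 1) μ = W (n + 1) lam + d),
            ∑ ρ ∈ C, if PShape n ρ ∧ HS ρ μ then ssytCount n ρ else 0 :=
          Finset.sum_comm
      _ = ∑ μ ∈ C.filter
            (fun μ => PShape (n + 1) μ ∧ HS lam μ ∧ W (n + 1) μ = W (n + 1) lam + d),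
            ∑ ρ ∈ C.filter (fun ρ => PShape n ρ ∧ HS ρ μ), ssytCount n ρ :=
          Finset.sum_congr rfl fun μ _ => (Finset.sum_filter _ _).symm
      _ = ∑ μ ∈ C.filter
            (fun μ => PShape (n + 1) μ ∧ HS lam μ ∧ W (n + 1) μ = W (n + 1) lam + d),
            ssytCount (n + 1) μ := by
          apply Finset.sum_congr rfl
          intro μ hμ
          rw [Finset.mem_filter] at hμ
          refine (branching_finset hμ.2.1 ?_).symm
          intro ρ hρ
          apply hmemCn ρ hρ.1
          intro i
          have hWρ : W n ρ ≤ W n μ := hρ.2.W_le n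
          have hWμ : W n μ ≤ W (n + 1) μ := by rw [W_succ_top]; omega
          have hWM : W (n + 1) μ = M := hμ.2.2.2
          calc ρ i ≤ W n ρ := hρ.1.le_W hn i
          _ ≤ M := by omega
      _ = ∑ᶠ (μ : ℕ → ℕ)
          (_ : PShape (n + 1) μ ∧ HS lam μ ∧ W (n + 1) μ = W (n + 1) lam + d),
            ssytCount (n + 1) μ := hRHS.symm

/-- Pieri's formula on the level of dimensions: for `n ≥ 1`, a partition `λ` with at
most `n` parts and an integer `d ≥ 0`, the number of semistandard tableaux of shape
`(d)` with entries in `{1, …, n}` times the number of semistandard tableaux of shape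
`λ` with entries in `{1, …, n}` equals the sum, over all partitions `μ` with at most
`n` parts obtained from `λ` by adding `d` boxes no two in the same column (i.e.
`λ ⊆ μ`, `|μ| = |λ| + d` and `μ_{i+1} ≤ λ_i` for all `i ≥ 1`), of the number of
semistandard tableaux of shape `μ` with entries in `{1, …, n}`. -/
theorem pieri_dimension_identity (n : ℕ) (hn : 1 ≤ n) (Λ : ℕ → ℕ)
    (hΛ0 : Λ 0 = 0)
    (hΛdec : ∀ i, 1 ≤ i → Λ (i + 1) ≤ Λ i)
    (hΛparts : ∀ i, n < i → Λ i = 0)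
    (d : ℕ) :
    ssytCount n (fun i => if i = 1 then d else 0) * ssytCount n Λ =
      ∑ᶠ (μ : ℕ → ℕ) (_ : μ 0 = 0 ∧ (∀ i, 1 ≤ i → μ (i + 1) ≤ μ i) ∧
          (∀ i, n < i → μ i = 0) ∧ (∀ i, 1 ≤ i → Λ i ≤ μ i) ∧
          (∑ i ∈ Finset.Icc 1 n, μ i) = (∑ i ∈ Finset.Icc 1 n, Λ i) + d ∧
          (∀ i, 1 ≤ i → μ (i + 1) ≤ Λ i)),
        ssytCount n μ := by
  have hsh : PShape n Λ := ⟨hΛ0, hΛdec, hΛparts⟩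
  have h := key n hn hsh d
  rw [show (fun i => if i = 1 then d else 0) = RowFun d from rfl, h]
  apply finsum_congr
  intro μ
  refine finsum_congr_Prop ?_ (fun _ => rfl)
  apply propext
  constructor
  · rintro ⟨⟨a1, a2, a3⟩, ⟨b1, b2⟩, c⟩
    exact ⟨a1, a2, a3, b1, c, b2⟩
  · rintro ⟨a1, a2, a3, b1, c, b2⟩
    exact ⟨⟨a1, a2, a3⟩, ⟨b1, b2⟩, c⟩
end Main
end

section
/- Let n ≥ 1 and let d_0 < d_1 < ⋯ < d_n be rational numbers. Then the Q-vector space of solutions β = (β_0, …, β_n) ∈ Q^{n+1} of the Herzog–Kühl equations ∑_{i=0}^{n} (−1)^i β_i d_i^k = 0 for k = 0, 1, …, n−1 has dimension exactly 1; it is spanned by the vector with entries β_i = ∏_{j≠i} 1/|d_j − d_i|. -/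
open Polynomial Finset Matrix

lemma lagrange_sum_zero {n : ℕ} (d : Fin (n+1) → ℚ) (hd : Function.Injective d)
    {k : ℕ} (hk : k < n) :
    ∑ i : Fin (n+1), d i ^ k * Lagrange.nodalWeight Finset.univ d i = 0 := by
  have hvs : Set.InjOn d ↑(univ : Finset (Fin (n+1))) := hd.injOn
  have hcard : (univ : Finset (Fin (n+1))).card = n + 1 := by simp
  have hdeg : (X ^ k : ℚ[X]).degree < (univ : Finset (Fin (n+1))).card := by
    rw [Polynomial.degree_X_pow, hcard]
    exact_mod_cast Nat.lt_succ_of_lt hk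
  have h := Lagrange.eq_interpolate hvs hdeg
  have hc := congrArg (fun p : ℚ[X] => p.coeff n) h
  simp only [Lagrange.interpolate_apply] at hc
  rw [Polynomial.coeff_X_pow, Polynomial.finset_sum_coeff] at hc
  have hb : ∀ i : Fin (n+1),
      (Polynomial.C ((X ^ k : ℚ[X]).eval (d i)) * Lagrange.basis univ d i).coeff n
        = d i ^ k * Lagrange.nodalWeight univ d i := by
    intro i
    have hbasis : Lagrange.basis univ d i
        = Polynomial.C (Lagrange.nodalWeight univ d i) * Lagrange.nodal (univ.erase i) d := by
      rw [Lagrange.basis_eq_prod_sub_inv_mul_nodal_div (mem_univ i),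
        Lagrange.nodal_erase_eq_nodal_div (mem_univ i)]
    have hmonic : (Lagrange.nodal (univ.erase i) d).Monic := Lagrange.nodal_monic
    have hnd : (Lagrange.nodal (univ.erase i) d).natDegree = n := by
      rw [Lagrange.natDegree_nodal, card_erase_of_mem (mem_univ i), hcard]; omega
    have hcoeff := hmonic.coeff_natDegree
    rw [hnd] at hcoeff
    rw [hbasis, ← mul_assoc, ← Polynomial.C_mul, Polynomial.coeff_C_mul, hcoeff]
    simp [mul_comm]
  rw [Finset.sum_congr rfl (fun i _ => hb i)] at hc
  rw [← hc, if_neg (Nat.ne_of_gt hk)]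

lemma weight_eq {n : ℕ} (d : Fin (n+1) → ℚ) (hd : StrictMono d) (i : Fin (n+1)) :
    (-1 : ℚ) ^ (i : ℕ) * ∏ j ∈ Finset.univ.erase i, |d j - d i|⁻¹
      = (-1 : ℚ) ^ n * Lagrange.nodalWeight Finset.univ d i := by
  have h1 : ∀ j ∈ Finset.univ.erase i, |d j - d i|⁻¹
      = (if i < j then (-1 : ℚ) else 1) * (d i - d j)⁻¹ := by
    intro j hj
    have hij : j ≠ i := (mem_erase.mp hj).1
    rcases lt_or_gt_of_ne hij with h | h
    · have : d j < d i := hd h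
      rw [abs_of_neg (by linarith), if_neg (not_lt.mpr h.le), one_mul, neg_sub]
    · have : d i < d j := hd h
      rw [abs_of_pos (by linarith), if_pos h]
      rw [show d j - d i = -(d i - d j) by ring, inv_neg, neg_one_mul]
  rw [Finset.prod_congr rfl h1, Finset.prod_mul_distrib]
  have hfilter : (Finset.univ.erase i).filter (fun j => i < j) = Finset.Ioi i := by
    ext j
    simp only [mem_filter, mem_erase, mem_univ, mem_Ioi, and_true, true_and]
    exact ⟨fun h => h.2, fun h => ⟨ne_of_gt h, h⟩⟩
  have h2 : ∏ j ∈ Finset.univ.erase i, (if i < j then (-1 : ℚ) else 1)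
      = (-1 : ℚ) ^ (n - (i : ℕ)) := by
    rw [Finset.prod_ite (fun _ => (-1 : ℚ)) (fun _ => (1 : ℚ)),
      Finset.prod_const, Finset.prod_const_one, mul_one, hfilter, Fin.card_Ioi]
    rfl
  rw [h2, ← mul_assoc, ← pow_add,
    Nat.add_sub_cancel' (Nat.lt_succ_iff.mp i.isLt)]
  rfl

/-- For `n ≥ 1` and rationals `d_0 < d_1 < ⋯ < d_n`, the space of solutions
`β ∈ ℚ^{n+1}` of the Herzog–Kühl equations `∑_{i=0}^n (-1)^i β_i d_i^k = 0` for
`k = 0, 1, …, n-1` is exactly the span of the nonzero vector with entries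
`β_i = ∏_{j ≠ i} 1 / |d_j - d_i|`; in particular it has dimension exactly 1. -/
theorem herzog_kuhl_solution_space (n : ℕ) (hn : 1 ≤ n) (d : Fin (n + 1) → ℚ)
    (hd : StrictMono d) :
    {β : Fin (n + 1) → ℚ | ∀ k, k < n → ∑ i : Fin (n + 1), (-1 : ℚ) ^ (i : ℕ) * β i * d i ^ k = 0}
        = ↑(Submodule.span ℚ
            ({fun i => ∏ j ∈ Finset.univ.erase i, |d j - d i|⁻¹} :
              Set (Fin (n + 1) → ℚ))) ∧
    (fun i : Fin (n + 1) => ∏ j ∈ Finset.univ.erase i, |d j - d i|⁻¹) ≠ 0 := by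
  classical
  have hdinj : Function.Injective d := hd.injective
  set w : Fin (n + 1) → ℚ := fun i => ∏ j ∈ Finset.univ.erase i, |d j - d i|⁻¹ with hwdef
  have hw0 : w ≠ 0 := by
    intro h
    have h0 := congrFun h 0
    simp only [hwdef, Pi.zero_apply] at h0
    rcases Finset.prod_eq_zero_iff.mp h0 with ⟨j, hj, hzero⟩
    have hji : j ≠ 0 := (Finset.mem_erase.mp hj).1
    have : d j ≠ d 0 := fun he => hji (hdinj he)
    simp only [inv_eq_zero, abs_eq_zero, sub_eq_zero] at hzero
    exact this hzero
  set A : Matrix (Fin n) (Fin (n + 1)) ℚ :=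
    Matrix.of (fun k i => (-1 : ℚ) ^ (i : ℕ) * d i ^ (k : ℕ)) with hA
  set L := A.mulVecLin with hL
  have hLapp : ∀ β k, L β k = ∑ i : Fin (n + 1), (-1 : ℚ) ^ (i : ℕ) * d i ^ (k : ℕ) * β i := by
    intro β k
    simp [hL, hA, Matrix.mulVecLin_apply, Matrix.mulVec, dotProduct]
  have hset : {β : Fin (n + 1) → ℚ |
      ∀ k, k < n → ∑ i : Fin (n + 1), (-1 : ℚ) ^ (i : ℕ) * β i * d i ^ k = 0}
        = ↑(LinearMap.ker L) := by
    ext β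
    simp only [Set.mem_setOf_eq, SetLike.mem_coe, LinearMap.mem_ker]
    constructor
    · intro h
      funext k
      rw [hLapp, Pi.zero_apply]
      have := h (k : ℕ) k.isLt
      rw [← this]
      exact Finset.sum_congr rfl fun i _ => by ring
    · intro h k hk
      have := congrFun h ⟨k, hk⟩
      rw [hLapp] at this
      simp only [Pi.zero_apply] at this
      rw [← this]
      exact Finset.sum_congr rfl fun i _ => by ring
  have hwker : w ∈ LinearMap.ker L := by
    rw [LinearMap.mem_ker]
    funext k
    rw [hLapp]
    have : ∀ i : Fin (n + 1), (-1 : ℚ) ^ (i : ℕ) * d i ^ (k : ℕ) * w i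
        = (-1 : ℚ) ^ n * (d i ^ (k : ℕ) * Lagrange.nodalWeight Finset.univ d i) := by
      intro i
      have := weight_eq d hd i
      calc (-1 : ℚ) ^ (i : ℕ) * d i ^ (k : ℕ) * w i
          = d i ^ (k : ℕ) * ((-1 : ℚ) ^ (i : ℕ) * w i) := by ring
        _ = d i ^ (k : ℕ) * ((-1 : ℚ) ^ n * Lagrange.nodalWeight Finset.univ d i) := by rw [this]
        _ = (-1 : ℚ) ^ n * (d i ^ (k : ℕ) * Lagrange.nodalWeight Finset.univ d i) := by ring
    rw [Finset.sum_congr rfl fun i _ => this i, ← Finset.mul_sum,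
      lagrange_sum_zero d hdinj k.isLt, mul_zero]
    rfl
  -- surjectivity of L
  set u : Fin n → ℚ := fun i => d i.castSucc with hu
  set V : Matrix (Fin n) (Fin n) ℚ :=
    Matrix.of (fun k i => (-1 : ℚ) ^ (i : ℕ) * u i ^ (k : ℕ)) with hV
  have hVdet : V.det ≠ 0 := by
    have hVt : Vᵀ = Matrix.diagonal (fun i : Fin n => (-1 : ℚ) ^ (i : ℕ))
        * Matrix.vandermonde u := by
      ext i k
      simp [hV, Matrix.diagonal_mul, Matrix.vandermonde]
    have huinj : Function.Injective u := fun a b hab =>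
      Fin.castSucc_injective n (hdinj hab)
    rw [← Matrix.det_transpose, hVt, Matrix.det_mul, Matrix.det_diagonal]
    apply mul_ne_zero
    · exact Finset.prod_ne_zero_iff.mpr fun i _ => by
        simp [pow_ne_zero]
    · exact (Matrix.det_vandermonde_ne_zero_iff).mpr huinj
  have hVV : V * V⁻¹ = 1 := Matrix.mul_nonsing_inv V (isUnit_iff_ne_zero.mpr hVdet)
  have hsurj : Function.Surjective L := by
    intro v
    refine ⟨Fin.snoc (V⁻¹.mulVec v) 0, ?_⟩
    funext k
    rw [hLapp, Fin.sum_univ_castSucc]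
    simp only [Fin.snoc_castSucc, Fin.snoc_last, mul_zero, add_zero]
    have : ∑ i : Fin n, (-1 : ℚ) ^ ((i.castSucc : Fin (n + 1)) : ℕ) * d i.castSucc ^ (k : ℕ)
        * (V⁻¹.mulVec v) i = (V.mulVec (V⁻¹.mulVec v)) k := by
      simp [Matrix.mulVec, dotProduct, hV, hu]
    rw [this, Matrix.mulVec_mulVec, hVV, Matrix.one_mulVec]
  have hker1 : Module.finrank ℚ (LinearMap.ker L) = 1 := by
    have hrn := LinearMap.finrank_range_add_finrank_ker L
    rw [LinearMap.range_eq_top.mpr hsurj, finrank_top] at hrn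
    simp only [Module.finrank_pi, Fintype.card_fin] at hrn
    omega
  have hle : Submodule.span ℚ {w} ≤ LinearMap.ker L :=
    Submodule.span_le.mpr (by simpa using hwker)
  have heq : Submodule.span ℚ {w} = LinearMap.ker L := by
    apply Submodule.eq_of_le_of_finrank_le hle
    rw [hker1, finrank_span_singleton hw0]
  exact ⟨by rw [hset, ← heq], hw0⟩
end

section
/- Let n ≥ 1 and let d_0 < d_1 < ⋯ < d_n be rational numbers. If β = (β_0, …, β_n) ∈ Q^{n+1} is a nonzero solution of the Herzog–Kühl equations ∑_{i=0}^{n} (−1)^i β_i d_i^k = 0 for k = 0, 1, …, n−1, then β_i ≠ 0 for every i, and all the β_i have the same sign (all strictly positive or all strictly negative). -/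
open Polynomial Finset

/-- For `n ≥ 1` and rationals `d_0 < d_1 < ⋯ < d_n`, any nonzero solution
`β ∈ ℚ^{n+1}` of the Herzog–Kühl equations `∑_{i=0}^n (-1)^i β_i d_i^k = 0` for
`k = 0, 1, …, n-1` has all entries nonzero, and all entries have the same sign. -/
theorem herzog_kuhl_nonzero_same_sign (n : ℕ) (hn : 1 ≤ n) (d : Fin (n + 1) → ℚ)
    (hd : StrictMono d) (β : Fin (n + 1) → ℚ) (hβ : β ≠ 0)
    (hHK : ∀ k, k < n → ∑ i : Fin (n + 1), (-1 : ℚ) ^ (i : ℕ) * β i * d i ^ k = 0) :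
    (∀ i, β i ≠ 0) ∧ ((∀ i, 0 < β i) ∨ (∀ i, β i < 0)) := by
  -- Step 1: the HK equations kill any polynomial of degree < n
  have L1 : ∀ q : Polynomial ℚ, q.natDegree < n →
      ∑ i : Fin (n + 1), (-1 : ℚ) ^ (i : ℕ) * β i * q.eval (d i) = 0 := by
    intro q hq
    have hev : ∀ i : Fin (n + 1), q.eval (d i) = ∑ k ∈ Finset.range n, q.coeff k * d i ^ k :=
      fun i => Polynomial.eval_eq_sum_range' hq (d i)
    calc ∑ i : Fin (n + 1), (-1 : ℚ) ^ (i : ℕ) * β i * q.eval (d i)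
        = ∑ i : Fin (n + 1), ∑ k ∈ Finset.range n,
            q.coeff k * ((-1 : ℚ) ^ (i : ℕ) * β i * d i ^ k) := by
          refine Finset.sum_congr rfl fun i _ => ?_
          rw [hev i, Finset.mul_sum]
          exact Finset.sum_congr rfl fun k _ => by ring
      _ = ∑ k ∈ Finset.range n, q.coeff k *
            ∑ i : Fin (n + 1), (-1 : ℚ) ^ (i : ℕ) * β i * d i ^ k := by
          rw [Finset.sum_comm]
          exact Finset.sum_congr rfl fun k _ => (Finset.mul_sum _ _ _).symm
      _ = 0 := by
          refine Finset.sum_eq_zero fun k hk => ?_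
          rw [hHK k (Finset.mem_range.mp hk), mul_zero]
  -- Step 2: consecutive β's are positive multiples of each other
  have key : ∀ a : Fin n, ∃ r : ℚ, 0 < r ∧ β a.succ = r * β a.castSucc := by
    intro a
    have hab : a.castSucc ≠ a.succ := Fin.castSucc_lt_succ.ne
    set s : Finset (Fin (n + 1)) := Finset.univ \ {a.castSucc, a.succ} with hs
    set Pa : ℚ := ∏ j ∈ s, (d a.castSucc - d j) with hPa
    set Pb : ℚ := ∏ j ∈ s, (d a.succ - d j) with hPb
    have hmem : ∀ j ∈ s, j ≠ a.castSucc ∧ j ≠ a.succ := by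
      intro j hj
      simp only [hs, Finset.mem_sdiff, Finset.mem_insert, Finset.mem_singleton,
        Finset.mem_univ, true_and] at hj
      exact ⟨fun h => hj (Or.inl h), fun h => hj (Or.inr h)⟩
    have hpos : 0 < Pa * Pb := by
      rw [hPa, hPb, ← Finset.prod_mul_distrib]
      refine Finset.prod_pos fun j hj => ?_
      obtain ⟨h1, h2⟩ := hmem j hj
      have hv1 : (j : ℕ) ≠ (a : ℕ) := fun h => h1 (Fin.ext (by simpa using h))
      have hv2 : (j : ℕ) ≠ (a : ℕ) + 1 := fun h => h2 (Fin.ext (by simpa using h))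
      rcases lt_or_gt_of_ne hv1 with h | h
      · have hja : j < a.castSucc := by simpa [Fin.lt_def] using h
        have hjb : j < a.succ := by simp [Fin.lt_def]; omega
        exact mul_pos (sub_pos.mpr (hd hja)) (sub_pos.mpr (hd hjb))
      · have hjb : a.succ < j := by simp [Fin.lt_def]; omega
        have hja : a.castSucc < j := by simp [Fin.lt_def]; omega
        exact mul_pos_of_neg_of_neg (sub_neg.mpr (hd hja)) (sub_neg.mpr (hd hjb))
    set q : Polynomial ℚ := ∏ j ∈ s, (X - C (d j)) with hq
    have hcard : s.card = n - 1 := by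
      rw [hs, Finset.card_sdiff_of_subset (Finset.subset_univ _), Finset.card_univ,
        Fintype.card_fin, Finset.card_pair hab]
      omega
    have hdeg : q.natDegree < n := by
      rw [hq, Polynomial.natDegree_prod _ _ (fun j _ => Polynomial.X_sub_C_ne_zero _)]
      simp only [Polynomial.natDegree_X_sub_C]
      rw [Finset.sum_const, smul_eq_mul, mul_one, hcard]
      omega
    have hevalPa : q.eval (d a.castSucc) = Pa := by
      simp [hq, hPa, Polynomial.eval_prod]
    have hevalPb : q.eval (d a.succ) = Pb := by
      simp [hq, hPb, Polynomial.eval_prod]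
    have hvan : ∀ i ∈ Finset.univ, i ∉ ({a.castSucc, a.succ} : Finset (Fin (n + 1))) →
        (-1 : ℚ) ^ (i : ℕ) * β i * q.eval (d i) = 0 := by
      intro i _ hi
      have his : i ∈ s := by simp [hs, hi]
      have : q.eval (d i) = 0 := by
        rw [hq, Polynomial.eval_prod]
        exact Finset.prod_eq_zero his (by simp)
      rw [this, mul_zero]
    have hsum : ∑ i ∈ ({a.castSucc, a.succ} : Finset (Fin (n + 1))),
        (-1 : ℚ) ^ (i : ℕ) * β i * q.eval (d i) = 0 := by
      rw [Finset.sum_subset (Finset.subset_univ _) hvan]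
      exact L1 q hdeg
    rw [Finset.sum_pair hab, hevalPa, hevalPb] at hsum
    have hvca : ((a.castSucc : Fin (n + 1)) : ℕ) = (a : ℕ) := by simp
    have hvsa : ((a.succ : Fin (n + 1)) : ℕ) = (a : ℕ) + 1 := by simp
    rw [hvca, hvsa] at hsum
    have heq : β a.castSucc * Pa = β a.succ * Pb := by
      have h2 : (-1 : ℚ) ^ (a : ℕ) * (β a.castSucc * Pa - β a.succ * Pb) = 0 := by
        linear_combination hsum
      have hne : ((-1 : ℚ) ^ (a : ℕ)) ≠ 0 := pow_ne_zero _ (by norm_num)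
      have := (mul_eq_zero.mp h2).resolve_left hne
      linarith
    have hPbne : Pb ≠ 0 := by
      intro h; rw [h, mul_zero] at hpos; exact lt_irrefl _ hpos
    refine ⟨Pa / Pb, ?_, ?_⟩
    · have h2 : Pa / Pb = (Pa * Pb) / (Pb * Pb) := by
        field_simp
      rw [h2]
      exact div_pos hpos (mul_self_pos.mpr hPbne)
    · field_simp
      linarith [heq]
  -- Step 3: every β i is a positive multiple of β 0
  have hchain : ∀ i : Fin (n + 1), ∃ r : ℚ, 0 < r ∧ β i = r * β 0 := by
    intro i
    induction i using Fin.induction with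
    | zero => exact ⟨1, one_pos, (one_mul _).symm⟩
    | succ a ih =>
      obtain ⟨r, hr, hβr⟩ := ih
      obtain ⟨r', hr', hβr'⟩ := key a
      exact ⟨r' * r, mul_pos hr' hr, by rw [hβr', hβr, mul_assoc]⟩
  have hβ0 : β 0 ≠ 0 := by
    intro h0
    apply hβ
    funext i
    obtain ⟨r, _, hβr⟩ := hchain i
    simp [hβr, h0]
  constructor
  · intro i
    obtain ⟨r, hr, hβr⟩ := hchain i
    rw [hβr]
    exact mul_ne_zero (ne_of_gt hr) hβ0
  · rcases lt_or_gt_of_ne hβ0 with h | h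
    · right
      intro i
      obtain ⟨r, hr, hβr⟩ := hchain i
      rw [hβr]
      exact mul_neg_of_pos_of_neg hr h
    · left
      intro i
      obtain ⟨r, hr, hβr⟩ := hchain i
      rw [hβr]
      exact mul_pos hr h
end
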